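/- Let (G,w) be an edge-weighted graph and x^a an exponent vector such that a_i < w(e) for every edge e incident to vertex x_i. Then sqrt(I(G_w) : x^a) = sqrt(I(G_w) : x^b), where b is obtained from a by setting the i-th coordinate to 0. -/

import Mathlib

open MvPolynomial

/-- If `a i < w(e)` for every edge `e` incident to the vertex `i`,
then `√(I(G_w) : x^a) = √(I(G_w) : x^b)` where `b` is `a` with `i`-th entry
replaced by `0`. -/
theorem stmt8 (K : Type*) [Field K] (n : ℕ) (G : SimpleGraph (Fin n))
    (w : Fin n → Fin n → ℕ) (hsym : ∀ i j, w i j = w j i)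
    (hpos : ∀ i j, G.Adj i j → 0 < w i j)
    (I : Ideal (MvPolynomial (Fin n) K))
    (hI : I = Ideal.span {p | ∃ i j, G.Adj i j ∧ p = (X i * X j) ^ w i j})
    (a : Fin n → ℕ) (i : Fin n)
    (ha : ∀ j, G.Adj i j → a i < w i j) :
    (Submodule.colon I
        (Ideal.span {∏ k, (X k : MvPolynomial (Fin n) K) ^ a k})).radical
      = (Submodule.colon I
        (Ideal.span {∏ k, (X k : MvPolynomial (Fin n) K) ^ Function.update a i 0 k})).radical := by
  classical
  set b : Fin n → ℕ := Function.update a i 0 with hbdef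
  have hbi : b i = 0 := Function.update_self i 0 a
  have hbl : ∀ l, l ≠ i → b l = a l := fun l hl => Function.update_of_ne hl 0 a
  set aF : Fin n →₀ ℕ := Finsupp.equivFunOnFinite.symm a with haF
  set bF : Fin n →₀ ℕ := Finsupp.equivFunOnFinite.symm b with hbF
  have haFv : ∀ l, aF l = a l := fun l => rfl
  have hbFv : ∀ l, bF l = b l := fun l => rfl
  -- products as monomials
  have hprod : ∀ c : Fin n → ℕ,
      (∏ k, (X k : MvPolynomial (Fin n) K) ^ c k)
        = monomial (Finsupp.equivFunOnFinite.symm c) 1 := by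
    intro c
    rw [← prod_X_pow_eq_monomial]
    refine (Finset.prod_subset (Finset.subset_univ _) ?_).symm
    intro k _ hk
    have hc : (Finsupp.equivFunOnFinite.symm c) k = 0 :=
      Finsupp.notMem_support_iff.mp hk
    have : c k = 0 := hc
    simp [this]
  have hxa : (∏ k, (X k : MvPolynomial (Fin n) K) ^ a k) = monomial aF 1 := hprod a
  have hxb : (∏ k, (X k : MvPolynomial (Fin n) K) ^ b k) = monomial bF 1 := hprod b
  -- I is a monomial ideal
  set S : Set (Fin n →₀ ℕ) :=
    {s | ∃ j k, G.Adj j k ∧ s = w j k • (Finsupp.single j 1 + Finsupp.single k 1)} with hS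
  have hgen : ∀ j k : Fin n,
      ((X j * X k : MvPolynomial (Fin n) K)) ^ w j k
        = monomial (w j k • (Finsupp.single j 1 + Finsupp.single k 1)) 1 := by
    intro j k
    rw [mul_pow, X_pow_eq_monomial, X_pow_eq_monomial, monomial_mul, one_mul]
    congr 1
    simp [smul_add, Finsupp.smul_single]
  have hI2 : I = Ideal.span ((fun s => monomial s (1 : K)) '' S) := by
    rw [hI]; congr 1
    ext p
    constructor
    · rintro ⟨j, k, hadj, rfl⟩
      exact ⟨_, ⟨j, k, hadj, rfl⟩, (hgen j k).symm⟩
    · rintro ⟨s, ⟨j, k, hadj, rfl⟩, rfl⟩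
      exact ⟨j, k, hadj, (hgen j k).symm⟩
  have memI : ∀ p : MvPolynomial (Fin n) K,
      p ∈ I ↔ ∀ m ∈ p.support, ∃ s ∈ S, s ≤ m := by
    intro p; rw [hI2]; exact mem_ideal_span_monomial_image
  -- values of the generators
  have hval : ∀ (j k l : Fin n),
      ((w j k • (Finsupp.single j 1 + Finsupp.single k 1) : Fin n →₀ ℕ)) l
        = w j k * ((Finsupp.single j 1 : Fin n →₀ ℕ) l + (Finsupp.single k 1 : Fin n →₀ ℕ) l) := by
    intro j k l
    simp [Finsupp.single_apply, mul_add, mul_ite]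
  have hvs : ∀ (j k : Fin n), j ≠ k →
      ((w j k • (Finsupp.single j 1 + Finsupp.single k 1) : Fin n →₀ ℕ)) j = w j k ∧
      ((w j k • (Finsupp.single j 1 + Finsupp.single k 1) : Fin n →₀ ℕ)) k = w j k := by
    intro j k hjk
    constructor
    · rw [hval, Finsupp.single_eq_same, Finsupp.single_eq_of_ne' (Ne.symm hjk)]; ring
    · rw [hval, Finsupp.single_eq_same, Finsupp.single_eq_of_ne' hjk]; ring
  have hv0 : ∀ (j k l : Fin n), j ≠ l → k ≠ l →
      ((w j k • (Finsupp.single j 1 + Finsupp.single k 1) : Fin n →₀ ℕ)) l = 0 := by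
    intro j k l h1 h2
    rw [hval, Finsupp.single_eq_of_ne' h1, Finsupp.single_eq_of_ne' h2]; ring
  -- easy inclusion : (I : x^b) ≤ (I : x^a)
  have hdir1 : Submodule.colon I (Ideal.span {∏ k, (X k : MvPolynomial (Fin n) K) ^ b k})
      ≤ Submodule.colon I (Ideal.span {∏ k, (X k : MvPolynomial (Fin n) K) ^ a k}) := by
    intro f hf
    rw [Ideal.mem_colon_span_singleton] at hf ⊢
    rw [hxa]
    rw [hxb] at hf
    have hFeq : aF = bF + Finsupp.single i (a i) := by
      ext l
      rw [Finsupp.add_apply, haFv, hbFv]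
      by_cases hl : l = i
      · subst hl
        rw [hbi, Finsupp.single_eq_same, zero_add]
      · rw [hbl l hl, Finsupp.single_eq_of_ne' (Ne.symm hl), add_zero]
    have hsplit : (monomial aF (1 : K))
        = monomial bF 1 * monomial (Finsupp.single i (a i)) 1 := by
      rw [monomial_mul, one_mul, hFeq]
    rw [hsplit, ← mul_assoc]
    exact Ideal.mul_mem_right _ _ hf
  -- hard inclusion : (I : x^a) ≤ √(I : x^b)
  have hdir2 : Submodule.colon I (Ideal.span {∏ k, (X k : MvPolynomial (Fin n) K) ^ a k})
      ≤ (Submodule.colon I (Ideal.span {∏ k, (X k : MvPolynomial (Fin n) K) ^ b k})).radical := by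
    intro f hf
    rw [Ideal.mem_colon_span_singleton, hxa] at hf
    rw [memI] at hf
    have hkey : ∀ m ∈ f.support, ∃ s ∈ S, s ≤ m + aF := by
      intro m hm
      apply hf
      rw [mem_support_iff, coeff_mul_monomial, mul_one]
      exact mem_support_iff.mp hm
    -- main induction
    have claim : ∀ N : ℕ, ∀ m ∈ (f ^ N).support,
        (∃ s ∈ S, s ≤ m + bF) ∨
        (N ≤ m i ∧ (1 ≤ N → ∃ k, G.Adj i k ∧ w i k ≤ m k + bF k)) := by
      intro N
      induction N with
      | zero =>
        intro m hm
        right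
        exact ⟨Nat.zero_le _, fun h => absurd h (by norm_num)⟩
      | succ N ih =>
        intro m hm
        rw [pow_succ] at hm
        obtain ⟨m2, hm2, m1, hm1, rfl⟩ := Finset.mem_add.mp (support_mul _ _ hm)
        obtain ⟨s, hsS, hs⟩ := hkey m1 hm1
        obtain ⟨j, k, hadj, rfl⟩ := hsS
        have hle : ∀ l, (w j k • (Finsupp.single j 1 + Finsupp.single k 1) : Fin n →₀ ℕ) l
            ≤ m1 l + a l := by
          intro l
          have := Finsupp.le_def.mp hs l
          rwa [Finsupp.add_apply, haFv] at this
        by_cases hinc : j = i ∨ k = i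
        · -- incident case
          have hcase : ∃ k', G.Adj i k' ∧ w i k' ≤ m1 k' + a k' ∧ w i k' ≤ m1 i + a i := by
            rcases hinc with hji | hki
            · subst hji
              obtain ⟨e1, e2⟩ := hvs j k hadj.ne
              exact ⟨k, hadj, by rw [← e2]; exact hle k, by rw [← e1]; exact hle j⟩
            · obtain ⟨e1, e2⟩ := hvs j k hadj.ne
              refine ⟨j, (hki ▸ hadj).symm, ?_, ?_⟩
              · rw [hsym i j, ← hki, ← e1]; exact hle j
              · rw [hsym i j, ← hki, ← e2]; exact hle k
          obtain ⟨k', hk', hwk1, hwk2⟩ := hcase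
          have hm1i : 1 ≤ m1 i := by
            have := ha k' hk'
            omega
          rcases ih m2 hm2 with ⟨s', hs'S, hs'⟩ | ⟨hNi, _⟩
          · left
            refine ⟨s', hs'S, hs'.trans ?_⟩
            rw [Finsupp.le_def]
            intro l
            simp only [Finsupp.add_apply]
            omega
          · right
            constructor
            · simp only [Finsupp.add_apply]; omega
            · intro _
              refine ⟨k', hk', ?_⟩
              have hki : k' ≠ i := fun h => (G.irrefl (h ▸ hk'))
              have hbk : bF k' = a k' := hbl k' hki
              simp only [Finsupp.add_apply]
              omega
        · -- non-incident case
          push_neg at hinc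
          left
          refine ⟨_, ⟨j, k, hadj, rfl⟩, ?_⟩
          rw [Finsupp.le_def]
          intro l
          by_cases hl : l = i
          · subst hl
            rw [hv0 j k l hinc.1 hinc.2]
            exact Nat.zero_le _
          · have h1 := hle l
            have h2 : bF l = a l := hbl l hl
            simp only [Finsupp.add_apply]
            omega
    -- conclude
    set N : ℕ := (Finset.univ.sup fun k => w i k) + 1 with hN
    refine ⟨N, ?_⟩
    rw [Ideal.mem_colon_span_singleton, hxb, memI]
    intro m hm
    obtain ⟨m', hm', t, ht, rfl⟩ := Finset.mem_add.mp
      ((support_mul _ _).trans (Finset.add_subset_add_left (support_monomial_subset)) hm)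
    have ht' : t = bF := Finset.mem_singleton.mp ht
    subst ht'
    rcases claim N m' hm' with ⟨s, hsS, hs⟩ | ⟨hNi, hx⟩
    · exact ⟨s, hsS, hs⟩
    · obtain ⟨k, hadj, hwk⟩ := hx (by omega)
      refine ⟨_, ⟨i, k, hadj, rfl⟩, ?_⟩
      have hik : i ≠ k := hadj.ne
      obtain ⟨e1, e2⟩ := hvs i k hik
      have hsup : w i k ≤ Finset.univ.sup fun k => w i k :=
        Finset.le_sup (Finset.mem_univ k)
      rw [Finsupp.le_def]
      intro l
      by_cases hli : l = i
      · subst hli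
        rw [e1, Finsupp.add_apply]
        have hb0 : bF l = 0 := hbi
        omega
      · by_cases hlk : l = k
        · subst hlk
          rw [e2, Finsupp.add_apply]
          omega
        · rw [hv0 i k l (fun h => hli h.symm) (fun h => hlk h.symm)]
          exact Nat.zero_le _
  -- combine
  apply le_antisymm
  · calc (Submodule.colon I (Ideal.span {∏ k, (X k : MvPolynomial (Fin n) K) ^ a k})).radical
        ≤ ((Submodule.colon I (Ideal.span {∏ k, (X k : MvPolynomial (Fin n) K) ^ b k})).radical).radical :=
          Ideal.radical_mono hdir2
      _ = _ := Ideal.radical_idem _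
  · exact Ideal.radical_mono hdir1
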